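/- Let n ≥ 1, λ₁,…,λₙ be nonzero reals, β₁,…,βₙ pairwise distinct nonzero reals, and I a nondegenerate interval with I ≠ ℝ. If V ⊆ ℝ∖I is a Lebesgue nonmeasurable set with inner measure 0, then the function x ↦ (Σᵢ λᵢ e^{βᵢ x}) · χ_{V∪I}(x) is Lebesgue nonmeasurable. -/

import Mathlib

open MeasureTheory

open Filter in
lemma expsum_analytic (n : ℕ) (l b : Fin n → ℝ) :
    AnalyticOnNhd ℝ (fun x => ∑ i, l i * Real.exp (b i * x)) Set.univ := by
  rw [show (fun x => ∑ i, l i * Real.exp (b i * x)) = ∑ i, fun x => l i * Real.exp (b i * x) from by funext x; simp [Finset.sum_apply]]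
  apply Finset.analyticOnNhd_sum
  intro i _ x _
  exact analyticAt_const.mul (analyticAt_rexp.comp (analyticAt_const.mul analyticAt_id))

open Filter in
lemma expsum_exists_ne (n : ℕ) (hn : 1 ≤ n) (l : Fin n → ℝ) (hl : ∀ i, l i ≠ 0)
    (b : Fin n → ℝ) (hbinj : Function.Injective b) :
    ∃ x, ∑ i, l i * Real.exp (b i * x) ≠ 0 := by
  by_contra h
  push_neg at h
  have hne : (Finset.univ : Finset (Fin n)).Nonempty := by
    refine Finset.univ_nonempty_iff.mpr ?_
    exact Fin.pos_iff_nonempty.mp hn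
  obtain ⟨i₀, -, hmax⟩ := Finset.exists_max_image Finset.univ b hne
  -- h' x = ∑ i, l i * exp ((b i - b i₀) * x) = 0 for all x
  have hzero : ∀ x : ℝ, ∑ i, l i * Real.exp ((b i - b i₀) * x) = 0 := by
    intro x
    have := h x
    have : (∑ i, l i * Real.exp (b i * x)) * Real.exp (-(b i₀ * x)) = 0 := by
      rw [this]; ring
    rw [Finset.sum_mul] at this
    rw [← this]
    apply Finset.sum_congr rfl
    intro i _
    rw [mul_assoc, ← Real.exp_add]
    ring_nf
  -- but the sum tends to l i₀ at infinity
  have htend : Tendsto (fun x : ℝ => ∑ i, l i * Real.exp ((b i - b i₀) * x)) atTop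
      (nhds (∑ i, if i = i₀ then l i₀ else 0)) := by
    apply tendsto_finset_sum
    intro i _
    by_cases hi : i = i₀
    · subst hi
      simp only [if_pos rfl, sub_self, zero_mul, Real.exp_zero, mul_one]
      exact tendsto_const_nhds
    · rw [if_neg hi]
      have hlt : b i - b i₀ < 0 := by
        have hle : b i ≤ b i₀ := hmax i (Finset.mem_univ i)
        have : b i ≠ b i₀ := fun hc => hi (hbinj hc)
        linarith [lt_of_le_of_ne hle this]
      have h1 : Tendsto (fun x : ℝ => (b i - b i₀) * x) atTop atBot :=
        tendsto_id.const_mul_atTop_of_neg hlt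
      have h2 : Tendsto (fun x : ℝ => Real.exp ((b i - b i₀) * x)) atTop (nhds 0) :=
        Real.tendsto_exp_atBot.comp h1
      have := h2.const_mul (l i)
      simpa using this
  have hsum : (∑ i, if i = i₀ then l i₀ else (0:ℝ)) = l i₀ := by simp
  rw [hsum] at htend
  have : Tendsto (fun _ : ℝ => (0:ℝ)) atTop (nhds (l i₀)) := by
    simpa [hzero] using htend
  exact hl i₀ (tendsto_nhds_unique this tendsto_const_nhds)

open Filter in
lemma expsum_zero_null (n : ℕ) (hn : 1 ≤ n) (l : Fin n → ℝ) (hl : ∀ i, l i ≠ 0)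
    (b : Fin n → ℝ) (hbinj : Function.Injective b) :
    volume {x : ℝ | ∑ i, l i * Real.exp (b i * x) = 0} = 0 := by
  set g := fun x : ℝ => ∑ i, l i * Real.exp (b i * x) with hg
  have hga := expsum_analytic n l b
  rcases hga.eqOn_zero_or_eventually_ne_zero_of_preconnected isPreconnected_univ with h | h
  · obtain ⟨x, hx⟩ := expsum_exists_ne n hn l hl b hbinj
    exact absurd (h (Set.mem_univ x)) hx
  · have hmem : {x : ℝ | g x ≠ 0} ∈ Filter.codiscrete ℝ := by
      rw [Filter.eventually_iff] at h
      exact h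
    obtain ⟨-, hdisc⟩ := mem_codiscrete'.mp hmem
    have hco : ({x : ℝ | g x ≠ 0}ᶜ : Set ℝ) = {x : ℝ | g x = 0} := by
      ext x; simp
    rw [hco] at hdisc
    have : Countable ({x : ℝ | g x = 0} : Set ℝ) :=
      by haveI := hdisc.to_subtype; exact TopologicalSpace.separableSpace_iff_countable.mp inferInstance
    exact (Set.countable_coe_iff.mp this).measure_zero _

/-- If `V ⊆ ℝ ∖ I` is nonmeasurable with inner measure `0` and `I` is a nondegenerate
interval different from `ℝ`, then `x ↦ (∑ᵢ λᵢ e^{βᵢ x}) · χ_{V ∪ I}(x)` is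
Lebesgue nonmeasurable. -/
theorem stmt_6 (n : ℕ) (hn : 1 ≤ n) (l : Fin n → ℝ) (hl : ∀ i, l i ≠ 0)
    (b : Fin n → ℝ) (hb0 : ∀ i, b i ≠ 0) (hbinj : Function.Injective b)
    (I : Set ℝ) (hI : I.OrdConnected) (hnd : ∃ p ∈ I, ∃ q ∈ I, p < q)
    (hIne : I ≠ Set.univ)
    (V : Set ℝ) (hVI : V ⊆ Iᶜ)
    (hVnm : ¬ NullMeasurableSet V (volume : Measure ℝ))
    (hVinner : ∀ s : Set ℝ, MeasurableSet s → s ⊆ V → volume s = 0) :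
    ¬ AEMeasurable
      (Set.indicator (V ∪ I) (fun x => ∑ i, l i * Real.exp (b i * x)))
      (volume : Measure ℝ) := by
  intro hmeas
  set g := fun x : ℝ => ∑ i, l i * Real.exp (b i * x) with hgdef
  have hIm : MeasurableSet I := hI.measurableSet
  have hgc : Continuous g := by
    apply continuous_finset_sum
    intro i _
    exact continuous_const.mul (Real.continuous_exp.comp (continuous_const.mul continuous_id))
  have hIg : Measurable (Set.indicator I g) := hgc.measurable.indicator hIm
  have hVg : AEMeasurable (Set.indicator V g) volume := by
    have heq : Set.indicator V g =
        fun x => Set.indicator (V ∪ I) g x - Set.indicator I g x := by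
      funext x
      by_cases hxI : x ∈ I
      · have hxV : x ∉ V := fun hxV => hVI hxV hxI
        simp [Set.indicator_of_mem hxI, Set.indicator_of_notMem hxV,
          Set.indicator_of_mem (Set.mem_union_right V hxI)]
      · by_cases hxV : x ∈ V
        · simp [Set.indicator_of_mem hxV, Set.indicator_of_notMem hxI,
            Set.indicator_of_mem (Set.mem_union_left I hxV)]
        · have : x ∉ V ∪ I := by simp [hxV, hxI]
          simp [Set.indicator_of_notMem hxV, Set.indicator_of_notMem hxI,
            Set.indicator_of_notMem this]
    rw [heq]
    exact hmeas.sub hIg.aemeasurable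
  set F := hVg.mk _ with hFdef
  have hF : Measurable F := hVg.measurable_mk
  have hae : Set.indicator V g =ᵐ[volume] F := hVg.ae_eq_mk
  set Z := {x : ℝ | g x = 0} with hZdef
  have hZ : volume Z = 0 := expsum_zero_null n hn l hl b hbinj
  have hS : NullMeasurableSet {x : ℝ | F x ≠ 0} volume :=
    (hF (measurableSet_singleton (0:ℝ)).compl).nullMeasurableSet
  have hSae : {x : ℝ | Set.indicator V g x ≠ 0} =ᵐ[volume] {x : ℝ | F x ≠ 0} := by
    filter_upwards [hae] with x hx
    change (Set.indicator V g x ≠ 0) = (F x ≠ 0)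
    rw [hx]
  have hS' : NullMeasurableSet {x : ℝ | Set.indicator V g x ≠ 0} volume :=
    hS.congr hSae.symm
  have hVeq : V = {x : ℝ | Set.indicator V g x ≠ 0} ∪ (V ∩ Z) := by
    ext x
    constructor
    · intro hxV
      by_cases hgx : g x = 0
      · exact Or.inr ⟨hxV, hgx⟩
      · exact Or.inl (show Set.indicator V g x ≠ 0 by
          rw [Set.indicator_of_mem hxV]; exact hgx)
    · rintro (hx | ⟨hxV, -⟩)
      · by_contra hxV
        exact hx (Set.indicator_of_notMem hxV g)
      · exact hxV
  have hVZ : NullMeasurableSet (V ∩ Z) volume :=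
    (NullMeasurableSet.of_null (measure_mono_null Set.inter_subset_right hZ))
  exact hVnm (hVeq ▸ hS'.union hVZ)
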